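/- Let n ≥ 1, let V ⊆ ℝ^{2n} be open, let F : V → ℝ be C², and let L : V → ℝ^{2n} × ℝ^{2n} be the Lagrangian lift L(x) = (x, Y_F(x)). Then for every x ∈ V, the following are equivalent: (a) L pulls back Ω₂ to zero at x, i.e. Ω₂((u, DY_F(x)u), (v, DY_F(x)v)) = 0 for all u, v ∈ ℝ^{2n}; (b) (DY_F(x))² = −I_{2n}. (This is the analytic content of the theorem that the solutions of the exterior differential system {Ω, Ω₂} are exactly the special improper affine spheres.) -/

import Mathlib

open Matrix

/-- The standard symplectic form on `ℝ^{2n}`, indexed by `Fin n ⊕ Fin n`. -/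
noncomputable def sform (n : ℕ) (u v : Fin n ⊕ Fin n → ℝ) : ℝ :=
  ∑ i : Fin n, (u (Sum.inl i) * v (Sum.inr i) - u (Sum.inr i) * v (Sum.inl i))

/-- The Hamiltonian vector field of `F`. -/
noncomputable def hamVF (n : ℕ) (F : (Fin n ⊕ Fin n → ℝ) → ℝ) (x : Fin n ⊕ Fin n → ℝ) :
    Fin n ⊕ Fin n → ℝ :=
  Sum.elim (fun i => -(fderiv ℝ F x (Pi.single (Sum.inr i) 1)))
    (fun i => fderiv ℝ F x (Pi.single (Sum.inl i) 1))

/-- The Jacobian matrix of a map between finite-dimensional coordinate spaces. -/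
noncomputable def jacM {ι κ : Type*} [Fintype ι] [DecidableEq ι] [Fintype κ]
    (g : (ι → ℝ) → (κ → ℝ)) (r : ι → ℝ) : Matrix κ ι ℝ :=
  Matrix.of fun i j => fderiv ℝ g r (Pi.single j 1) i

/-- The form `Ω₂((u,a),(v,b)) = ω(u,v) − ω(a,b)` on `ℝ^{2n} × ℝ^{2n}`. -/
noncomputable def Omega2Form (n : ℕ)
    (w w' : (Fin n ⊕ Fin n → ℝ) × (Fin n ⊕ Fin n → ℝ)) : ℝ :=
  sform n w.1 w'.1 - sform n w.2 w'.2

-- scratch lemmas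
section scratch
variable (n : ℕ)

noncomputable def Jm (n : ℕ) : Matrix (Fin n ⊕ Fin n) (Fin n ⊕ Fin n) ℝ :=
  Matrix.fromBlocks 0 1 (-1) 0

lemma sform_eq (u v : Fin n ⊕ Fin n → ℝ) : sform n u v = u ⬝ᵥ (Jm n).mulVec v := by
  simp [sform, Jm, dotProduct, Fintype.sum_sum_type, mulVec, Finset.sum_sub_distrib,
    Matrix.fromBlocks, Matrix.one_apply, mul_comm, sub_eq_add_neg, Finset.sum_add_distrib]

lemma Jm_mul_Jm : Jm n * Jm n = -1 := by
  simp [Jm, Matrix.fromBlocks_multiply]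
  ext (i|i) (j|j) <;> simp [Matrix.fromBlocks, Matrix.one_apply]

lemma Jm_transpose : (Jm n)ᵀ = -(Jm n) := by
  simp [Jm, Matrix.fromBlocks_transpose]
  ext (i|i) (j|j) <;> simp [Matrix.fromBlocks]

end scratch

section main
variable {n : ℕ} {F : (Fin n ⊕ Fin n → ℝ) → ℝ} {x : Fin n ⊕ Fin n → ℝ}

lemma diffAt_app (hdf : DifferentiableAt ℝ (fderiv ℝ F) x) (c : Fin n ⊕ Fin n → ℝ) :
    DifferentiableAt ℝ (fun y => fderiv ℝ F y c) x :=
  (ContinuousLinearMap.apply ℝ ℝ c).differentiableAt.comp x hdf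

lemma fderiv_app (hdf : DifferentiableAt ℝ (fderiv ℝ F) x) (c w : Fin n ⊕ Fin n → ℝ) :
    fderiv ℝ (fun y => fderiv ℝ F y c) x w = fderiv ℝ (fderiv ℝ F) x w c := by
  have h : (fun y => fderiv ℝ F y c) = (ContinuousLinearMap.apply ℝ ℝ c) ∘ (fderiv ℝ F) := rfl
  rw [h, fderiv_comp (x := x) (ContinuousLinearMap.differentiableAt _) hdf]
  simp

lemma jac_entry (hdf : DifferentiableAt ℝ (fderiv ℝ F) x) (k j : Fin n ⊕ Fin n) :
    jacM (hamVF n F) x k j =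
      Sum.elim (fun i => -(fderiv ℝ (fderiv ℝ F) x (Pi.single j 1) (Pi.single (Sum.inr i) 1)))
        (fun i => fderiv ℝ (fderiv ℝ F) x (Pi.single j 1) (Pi.single (Sum.inl i) 1)) k := by
  have hd : ∀ k : Fin n ⊕ Fin n, DifferentiableAt ℝ (fun y => hamVF n F y k) x := by
    rintro (i|i)
    · exact (diffAt_app hdf _).neg
    · exact diffAt_app hdf _
  have hpi : fderiv ℝ (hamVF n F) x
      = ContinuousLinearMap.pi (fun k => fderiv ℝ (fun y => hamVF n F y k) x) :=
    fderiv_pi hd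
  have : jacM (hamVF n F) x k j = fderiv ℝ (hamVF n F) x (Pi.single j 1) k := rfl
  rw [this, hpi]
  rcases k with i | i
  · show fderiv ℝ (fun y => -(fderiv ℝ F y (Pi.single (Sum.inr i) 1))) x (Pi.single j 1) = _
    rw [fderiv_fun_neg]
    simp [fderiv_app hdf]
  · show fderiv ℝ (fun y => fderiv ℝ F y (Pi.single (Sum.inl i) 1)) x (Pi.single j 1) = _
    simp [fderiv_app hdf]
end main

lemma forms_iff {n : ℕ} (M N : Matrix (Fin n ⊕ Fin n) (Fin n ⊕ Fin n) ℝ) :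
    (∀ u v, u ⬝ᵥ M.mulVec v = u ⬝ᵥ N.mulVec v) ↔ M = N := by
  constructor
  · intro h
    ext k j
    have := h (Pi.single k 1) (Pi.single j 1)
    simpa using this
  · rintro rfl u v; rfl

lemma dp_helper {n : ℕ} (A M : Matrix (Fin n ⊕ Fin n) (Fin n ⊕ Fin n) ℝ)
    (u v : Fin n ⊕ Fin n → ℝ) :
    (A *ᵥ u) ⬝ᵥ (M *ᵥ (A *ᵥ v)) = u ⬝ᵥ ((Aᵀ * M * A) *ᵥ v) := by
  rw [Matrix.mulVec_mulVec, ← Matrix.vecMul_transpose, Matrix.dotProduct_mulVec,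
    Matrix.vecMul_vecMul, ← Matrix.dotProduct_mulVec, Matrix.mul_assoc]


theorem stmt19 (n : ℕ) (hn : 1 ≤ n) (V : Set (Fin n ⊕ Fin n → ℝ)) (hV : IsOpen V)
    (F : (Fin n ⊕ Fin n → ℝ) → ℝ) (hF : ContDiffOn ℝ 2 F V) :
    ∀ x ∈ V,
      ((∀ u v : Fin n ⊕ Fin n → ℝ,
        Omega2Form n (u, (jacM (hamVF n F) x).mulVec u)
          (v, (jacM (hamVF n F) x).mulVec v) = 0) ↔
      jacM (hamVF n F) x * jacM (hamVF n F) x = -1) := by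
  intro x hx
  have hx2 : ContDiffAt ℝ 2 F x := hF.contDiffAt (hV.mem_nhds hx)
  have hdf : DifferentiableAt ℝ (fderiv ℝ F) x :=
    (hx2.fderiv_right (m := 1) (by norm_num)).differentiableAt one_ne_zero
  have hsym : IsSymmSndFDerivAt ℝ F x := hx2.isSymmSndFDerivAt (by norm_num)
  set A := jacM (hamVF n F) x with hA
  have hJ2 := Jm_mul_Jm n
  have hJT := Jm_transpose n
  -- J * A is symmetric
  have hJA : Jm n * A =
      Matrix.of (fun k j => fderiv ℝ (fderiv ℝ F) x (Pi.single j 1) (Pi.single k 1)) := by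
    ext k j
    rcases k with i | i <;>
      simp [Matrix.mul_apply, Jm, Matrix.fromBlocks, Fintype.sum_sum_type, Matrix.one_apply,
        jac_entry hdf, Finset.sum_ite_eq, ite_mul, A]
  have hHsym : (Jm n * A)ᵀ = Jm n * A := by
    rw [hJA]; ext k j
    exact hsym _ _
  -- Aᵀ = J * A * J
  have h1 : Aᵀ * (-(Jm n)) = Jm n * A := by
    rw [← hJT, ← Matrix.transpose_mul]; exact hHsym
  rw [Matrix.mul_neg] at h1
  have h2 : Aᵀ * Jm n = -(Jm n * A) := neg_eq_iff_eq_neg.mp h1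
  have hAT : Aᵀ = Jm n * A * Jm n := by
    have h3 : Aᵀ * Jm n * Jm n = -(Jm n * A) * Jm n := by rw [h2]
    rw [Matrix.mul_assoc, hJ2] at h3
    simp only [Matrix.mul_neg, Matrix.mul_one, Matrix.neg_mul] at h3
    exact neg_injective h3
  have hkey : Aᵀ * Jm n * A = -(Jm n * (A * A)) := by
    rw [hAT]
    calc Jm n * A * Jm n * Jm n * A = Jm n * A * (Jm n * Jm n) * A := by
          rw [Matrix.mul_assoc (Jm n * A)]
      _ = -(Jm n * (A * A)) := by
          rw [hJ2]; simp [Matrix.mul_assoc]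
  -- the bilinear condition
  have hcond : (∀ u v : Fin n ⊕ Fin n → ℝ,
      Omega2Form n (u, A.mulVec u) (v, A.mulVec v) = 0) ↔ Jm n = Aᵀ * Jm n * A := by
    rw [← forms_iff]
    constructor
    · intro h u v
      have := h u v
      rw [Omega2Form, sub_eq_zero] at this
      simp only at this
      rw [sform_eq, sform_eq, dp_helper] at this
      exact this
    · intro h u v
      rw [Omega2Form, sub_eq_zero]
      simp only
      rw [sform_eq, sform_eq, dp_helper]
      exact h u v
  rw [hcond, hkey]
  constructor
  · intro h
    have h4 : Jm n * Jm n = Jm n * -(Jm n * (A * A)) := by rw [← h]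
    rw [hJ2, Matrix.mul_neg, ← Matrix.mul_assoc, hJ2] at h4
    simpa using h4.symm
  · intro h
    rw [h]
    simp [hJ2]
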